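/- Let I and J be finite nonempty sets, f : I → J a function, p a probability distribution on I, and for each i ∈ I let ρ_A^i be a density matrix on ℂ^{d_A}. Set ρ_AB := ∑_{i∈I} p_i·ρ_A^i ⊗ |i⟩⟨i| on ℂ^{d_A}⊗ℂ^{|I|} and ρ_ABC := ∑_{i∈I} p_i·ρ_A^i ⊗ |i⟩⟨i| ⊗ |f(i)⟩⟨f(i)| on ℂ^{d_A}⊗ℂ^{|I|}⊗ℂ^{|J|}. Then for every ε ∈ [0,1), H^ε_min(A|B)_{ρ_AB} = H^ε_min(A|BC)_{ρ_ABC}, where on the right the factor ℂ^{|I|}⊗ℂ^{|J|} plays the role of the conditioning system. -/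

import Mathlib

open Matrix
open scoped Kronecker Classical ComplexOrder

/-- The positive semidefinite square root of a positive semidefinite matrix
(junk value `0` on non-PSD input). -/
noncomputable def msqrt {n : Type*} [Fintype n] [DecidableEq n] (A : Matrix n n ℂ) :
    Matrix n n ℂ :=
  if h : A.PosSemidef then
    (h.1.eigenvectorUnitary : Matrix n n ℂ) * diagonal ((↑) ∘ (√·) ∘ h.1.eigenvalues) *
      (star h.1.eigenvectorUnitary : Matrix n n ℂ)
  else 0

/-- The min-entropy `H_min(A|B)_ρ = −log₂ inf{ Tr(Y) : Y ≥ 0 on B, ρ ≤ 𝟙_A ⊗ Y }`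
of a (subnormalized) state on the bipartite system `A ⊗ B`. -/
noncomputable def Hmin {m n : Type*} [Fintype m] [DecidableEq m] [Fintype n] [DecidableEq n]
    (ρ : Matrix (m × n) (m × n) ℂ) : ℝ :=
  -Real.logb 2
    (sInf {t : ℝ | ∃ Y : Matrix n n ℂ, Y.PosSemidef ∧
      (((1 : Matrix m m ℂ) ⊗ₖ Y) - ρ).PosSemidef ∧ t = (Y.trace).re})

/-- The generalized fidelity
`F(ρ,σ) = Tr √(√σ·ρ·√σ) + √((1 − Tr ρ)(1 − Tr σ))` of subnormalized states. -/
noncomputable def gfid {n : Type*} [Fintype n] [DecidableEq n]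
    (ρ σ : Matrix n n ℂ) : ℝ :=
  ((msqrt (msqrt σ * ρ * msqrt σ)).trace).re +
    Real.sqrt ((1 - (ρ.trace).re) * (1 - (σ.trace).re))

/-- The purified distance `P(ρ,σ) = √(1 − F(ρ,σ)²)`. -/
noncomputable def pdist {n : Type*} [Fintype n] [DecidableEq n]
    (ρ σ : Matrix n n ℂ) : ℝ :=
  Real.sqrt (1 - gfid ρ σ ^ 2)

/-- The smooth min-entropy
`H^ε_min(A|B)_ρ = sup{ H_min(A|B)_ρ̃ : ρ̃ subnormalized, P(ρ̃,ρ) ≤ ε }`. -/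
noncomputable def smoothHmin {m n : Type*} [Fintype m] [DecidableEq m]
    [Fintype n] [DecidableEq n] (ε : ℝ) (ρ : Matrix (m × n) (m × n) ℂ) : ℝ :=
  sSup {t : ℝ | ∃ ρ' : Matrix (m × n) (m × n) ℂ, ρ'.PosSemidef ∧ (ρ'.trace).re ≤ 1 ∧
    pdist ρ' ρ ≤ ε ∧ t = Hmin ρ'}


section AuxiliaryLemmas

namespace StmtAux

variable {l m n p q : Type*}
  [Fintype l] [DecidableEq l] [Fintype m] [DecidableEq m]
  [Fintype n] [DecidableEq n] [Fintype p] [DecidableEq p]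
  [Fintype q] [DecidableEq q]

lemma kron_conjT (A : Matrix l m ℂ) (B : Matrix p q ℂ) :
    (A ⊗ₖ B)ᴴ = Aᴴ ⊗ₖ Bᴴ := by
  ext ⟨i, j⟩ ⟨k, r⟩
  simp [conjTranspose_apply, kroneckerMap_apply, mul_comm]

open scoped MatrixOrder in
lemma psd_exists_eq {A : Matrix m m ℂ} (hA : A.PosSemidef) : ∃ B : Matrix m m ℂ, A = Bᴴ * B :=
  ⟨CFC.sqrt A, by rw [(CFC.sqrt_nonneg A).posSemidef.1.eq, CFC.sqrt_mul_sqrt_self A hA.nonneg]⟩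

lemma psd_kron {A : Matrix m m ℂ} {B : Matrix n n ℂ}
    (hA : A.PosSemidef) (hB : B.PosSemidef) : (A ⊗ₖ B).PosSemidef := by
  obtain ⟨C, rfl⟩ := psd_exists_eq hA
  obtain ⟨D, rfl⟩ := psd_exists_eq hB
  rw [Matrix.mul_kronecker_mul, ← kron_conjT]
  exact posSemidef_conjTranspose_mul_self _

lemma psd_smul {A : Matrix m m ℂ} (hA : A.PosSemidef) {c : ℝ} (hc : 0 ≤ c) :
    ((c : ℂ) • A).PosSemidef := by
  refine .of_dotProduct_mulVec_nonneg ?_ fun x => ?_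
  · unfold Matrix.IsHermitian
    rw [conjTranspose_smul, hA.1.eq]
    congr 1
    simp [Complex.ext_iff]
  · rw [smul_mulVec, dotProduct_smul]
    exact mul_nonneg (by simp [Complex.le_def, hc]) (hA.dotProduct_mulVec_nonneg x)

lemma psd_sum {s : Finset l} (F : l → Matrix m m ℂ)
    (h : ∀ i ∈ s, (F i).PosSemidef) : (∑ i ∈ s, F i).PosSemidef := by
  classical
  induction s using Finset.induction with
  | empty => simpa using Matrix.PosSemidef.zero
  | insert _ _ hx ih =>
    rw [Finset.sum_insert hx]
    exact ((h _ (Finset.mem_insert_self _ _))).add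
      (ih fun i hi => h i (Finset.mem_insert_of_mem hi))

lemma trace_eq_sum_eigenvalues {A : Matrix m m ℂ} (hA : A.IsHermitian) :
    A.trace = ∑ i, (hA.eigenvalues i : ℂ) := by
  conv_lhs => rw [hA.spectral_theorem, Unitary.conjStarAlgAut_apply]
  rw [Matrix.trace_mul_cycle]
  have h1 : (star (hA.eigenvectorUnitary : Matrix m m ℂ)) *
      (hA.eigenvectorUnitary : Matrix m m ℂ) = 1 := by
    exact Unitary.coe_star_mul_self _
  rw [mul_assoc] at *
  rw [show (star (hA.eigenvectorUnitary : Matrix m m ℂ)) *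
      ((hA.eigenvectorUnitary : Matrix m m ℂ) *
        diagonal (RCLike.ofReal ∘ hA.eigenvalues)) =
      diagonal (RCLike.ofReal ∘ hA.eigenvalues) by
    rw [← mul_assoc, h1, one_mul]]
  simp [Matrix.trace_diagonal]

lemma psd_trace_re_nonneg {A : Matrix m m ℂ} (hA : A.PosSemidef) :
    0 ≤ A.trace.re := by
  rw [trace_eq_sum_eigenvalues hA.1]
  simp only [Complex.re_sum]
  exact Finset.sum_nonneg fun i _ => by
    simpa using hA.eigenvalues_nonneg i

lemma psd_eq_zero_of_trace {A : Matrix m m ℂ} (hA : A.PosSemidef)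
    (h : A.trace.re = 0) : A = 0 := by
  obtain ⟨B, rfl⟩ := psd_exists_eq hA
  have hij : ∀ i j, B i j = 0 := by
    have htr : (Bᴴ * B).trace.re = ∑ j, ∑ i, Complex.normSq (B i j) := by
      simp only [Matrix.trace, Matrix.diag, Matrix.mul_apply, conjTranspose_apply,
        Complex.re_sum]
      refine Finset.sum_congr rfl fun j _ => Finset.sum_congr rfl fun i _ => ?_
      rw [mul_comm, show star (B i j) = (starRingEnd ℂ) (B i j) from rfl,
        Complex.mul_conj, Complex.ofReal_re]
    rw [htr] at h
    intro i j
    have := (Finset.sum_eq_zero_iff_of_nonneg (fun j _ => Finset.sum_nonneg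
      (fun i _ => Complex.normSq_nonneg _))).mp h j (Finset.mem_univ j)
    have := (Finset.sum_eq_zero_iff_of_nonneg (fun i _ => Complex.normSq_nonneg _)).mp
      this i (Finset.mem_univ i)
    exact Complex.normSq_eq_zero.mp this
  have hB : B = 0 := by ext i j; exact hij i j
  rw [hB]; simp

lemma psd_le_trace_smul_one {A : Matrix m m ℂ} (hA : A.PosSemidef) :
    (((A.trace.re : ℂ)) • 1 - A).PosSemidef := by
  set c : ℝ := A.trace.re with hc
  have hcsum : c = ∑ i, hA.1.eigenvalues i := by
    rw [hc, trace_eq_sum_eigenvalues hA.1]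
    simp [Complex.re_sum]
  have key : ((c : ℂ)) • (1 : Matrix m m ℂ) - A =
      (hA.1.eigenvectorUnitary : Matrix m m ℂ) *
        ((c : ℂ) • 1 - diagonal (RCLike.ofReal ∘ hA.1.eigenvalues)) *
        (star (hA.1.eigenvectorUnitary : Matrix m m ℂ)) := by
    rw [Matrix.mul_sub, Matrix.sub_mul]
    congr 1
    · have hU : (hA.1.eigenvectorUnitary : Matrix m m ℂ) *
          star (hA.1.eigenvectorUnitary : Matrix m m ℂ) = 1 :=
        Matrix.mem_unitaryGroup_iff.mp hA.1.eigenvectorUnitary.2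
      rw [mul_smul_comm, mul_one, smul_mul_assoc, hU]
    · exact hA.1.spectral_theorem
  have hdiag : ((c : ℂ) • (1 : Matrix m m ℂ) - diagonal (RCLike.ofReal ∘ hA.1.eigenvalues)) =
      diagonal (fun i => ((c - hA.1.eigenvalues i : ℝ) : ℂ)) := by
    rw [smul_one_eq_diagonal, diagonal_sub]
    congr 1; ext i; simp
  rw [key, hdiag]
  have hd : (diagonal (fun i => ((c - hA.1.eigenvalues i : ℝ) : ℂ))).PosSemidef := by
    refine Matrix.PosSemidef.diagonal fun i => ?_
    have h1 : hA.1.eigenvalues i ≤ c := by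
      rw [hcsum]
      exact Finset.single_le_sum (fun j _ => hA.eigenvalues_nonneg j) (Finset.mem_univ i)
    simp only [Complex.le_def]
    constructor
    · simpa using sub_nonneg.mpr h1
    · simp
  have := hd.mul_mul_conjTranspose_same (hA.1.eigenvectorUnitary : Matrix m m ℂ)
  simpa [Matrix.star_eq_conjTranspose] using this

end StmtAux

namespace StmtAux2

variable {m n p : Type*}
  [Fintype m] [DecidableEq m] [Fintype n] [DecidableEq n] [Fintype p] [DecidableEq p]

open StmtAux
open scoped MatrixOrder

lemma msqrt_eq_sqrt {A : Matrix m m ℂ} (hA : A.PosSemidef) : msqrt A = CFC.sqrt A := by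
  rw [msqrt, dif_pos hA, CFC.sqrt_eq_real_sqrt A hA.nonneg, cfcₙ_eq_cfc, Matrix.IsHermitian.cfc_eq hA.1,
    Matrix.IsHermitian.cfc, Unitary.conjStarAlgAut_apply]
  rfl

lemma msqrt_psd {A : Matrix m m ℂ} (hA : A.PosSemidef) : (msqrt A).PosSemidef := by
  rw [msqrt_eq_sqrt hA]; exact (CFC.sqrt_nonneg A).posSemidef

lemma msqrt_mul_self {A : Matrix m m ℂ} (hA : A.PosSemidef) : msqrt A * msqrt A = A := by
  rw [msqrt_eq_sqrt hA]; exact CFC.sqrt_mul_sqrt_self A hA.nonneg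

lemma msqrt_zero : msqrt (0 : Matrix m m ℂ) = 0 := by
  rw [msqrt_eq_sqrt Matrix.PosSemidef.zero]
  exact CFC.sqrt_zero

lemma msqrt_sq {A : Matrix m m ℂ} (hA : A.PosSemidef) : msqrt (A * A) = A := by
  have hAA : (A * A).PosSemidef := by
    have := hA.pow 2; rwa [pow_two] at this
  rw [msqrt_eq_sqrt hAA]
  exact CFC.sqrt_mul_self A hA.nonneg

lemma msqrt_conj {W : Matrix p m ℂ} (hW : Wᴴ * W = 1) {A : Matrix m m ℂ}
    (hA : A.PosSemidef) : msqrt (W * A * Wᴴ) = W * msqrt A * Wᴴ := by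
  have h1 : (W * A * Wᴴ).PosSemidef := hA.mul_mul_conjTranspose_same W
  rw [msqrt_eq_sqrt h1, msqrt_eq_sqrt hA]
  refine CFC.sqrt_unique ?_
    ((CFC.sqrt_nonneg A).posSemidef.mul_mul_conjTranspose_same W).nonneg
  calc W * CFC.sqrt A * Wᴴ * (W * CFC.sqrt A * Wᴴ)
      = W * (CFC.sqrt A * (Wᴴ * W) * CFC.sqrt A) * Wᴴ := by simp only [Matrix.mul_assoc]
    _ = W * A * Wᴴ := by rw [hW, Matrix.mul_one, CFC.sqrt_mul_sqrt_self A hA.nonneg]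

lemma trace_conj {W : Matrix p m ℂ} (hW : Wᴴ * W = 1) (X : Matrix m m ℂ) :
    (W * X * Wᴴ).trace = X.trace := by
  rw [Matrix.trace_mul_cycle, hW, Matrix.one_mul]

lemma proj_psd {W : Matrix p m ℂ} (hW : Wᴴ * W = 1) :
    ((1 : Matrix p p ℂ) - W * Wᴴ).PosSemidef := by
  have key : ((1 : Matrix p p ℂ) - W * Wᴴ)ᴴ * ((1 : Matrix p p ℂ) - W * Wᴴ) =
      (1 : Matrix p p ℂ) - W * Wᴴ := by
    have hherm : ((1 : Matrix p p ℂ) - W * Wᴴ)ᴴ = (1 : Matrix p p ℂ) - W * Wᴴ := by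
      simp [conjTranspose_sub, conjTranspose_mul]
    rw [hherm, Matrix.sub_mul, Matrix.mul_sub, Matrix.mul_sub]
    have hPP : (W * Wᴴ) * (W * Wᴴ) = W * Wᴴ := by
      calc (W * Wᴴ) * (W * Wᴴ) = W * (Wᴴ * W) * Wᴴ := by simp only [Matrix.mul_assoc]
        _ = W * Wᴴ := by rw [hW, Matrix.mul_one]
    rw [hPP]
    simp
  rw [← key]
  exact Matrix.posSemidef_conjTranspose_mul_self _

lemma trace_mul_psd_re_nonneg {A B : Matrix m m ℂ} (hA : A.PosSemidef)
    (hB : B.PosSemidef) : 0 ≤ ((A * B).trace).re := by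
  have hs := msqrt_mul_self hB
  have : (A * B).trace = ((msqrt B) * A * (msqrt B)).trace := by
    conv_lhs => rw [← hs, ← Matrix.mul_assoc, Matrix.trace_mul_cycle]
  rw [this]
  have hpsd : ((msqrt B) * A * (msqrt B)).PosSemidef := by
    have := hA.conjTranspose_mul_mul_same (msqrt B)
    rwa [(msqrt_psd hB).1.eq] at this
  exact psd_trace_re_nonneg hpsd

lemma trace_re_pull_le {W : Matrix p m ℂ} (hW : Wᴴ * W = 1) {ρ : Matrix p p ℂ}
    (hρ : ρ.PosSemidef) : ((Wᴴ * ρ * W).trace).re ≤ (ρ.trace).re := by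
  have h3 : (Wᴴ * ρ * W).trace = (ρ * (W * Wᴴ)).trace := by
    rw [Matrix.trace_mul_cycle Wᴴ ρ W, Matrix.trace_mul_cycle W Wᴴ ρ, Matrix.mul_assoc]
  have h1 : ρ.trace = (ρ * (W * Wᴴ)).trace + (ρ * (1 - W * Wᴴ)).trace := by
    rw [← Matrix.trace_add, ← Matrix.mul_add]
    simp
  have h2 : 0 ≤ ((ρ * (1 - W * Wᴴ)).trace).re :=
    trace_mul_psd_re_nonneg hρ (proj_psd hW)
  have := congrArg Complex.re h1
  rw [Complex.add_re] at this
  rw [h3]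
  linarith

end StmtAux2

namespace StmtAux3

open StmtAux StmtAux2

variable {m n n' : Type*} [Fintype m] [DecidableEq m] [Fintype n] [DecidableEq n]
  [Fintype n'] [DecidableEq n']

/-- the feasible-trace set appearing inside `Hmin` -/
def HS {m n : Type*} [Fintype m] [DecidableEq m] [Fintype n] [DecidableEq n]
    (ρ : Matrix (m × n) (m × n) ℂ) : Set ℝ :=
  {t : ℝ | ∃ Y : Matrix n n ℂ, Y.PosSemidef ∧
      (((1 : Matrix m m ℂ) ⊗ₖ Y) - ρ).PosSemidef ∧ t = (Y.trace).re}

lemma Hmin_eq (ρ : Matrix (m × n) (m × n) ℂ) :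
    Hmin ρ = -Real.logb 2 (sInf (HS ρ)) := rfl

lemma W_isometry {V : Matrix n' n ℂ} (hV : Vᴴ * V = 1) :
    ((1 : Matrix m m ℂ) ⊗ₖ V)ᴴ * ((1 : Matrix m m ℂ) ⊗ₖ V) = 1 := by
  rw [kron_conjT, conjTranspose_one, ← Matrix.mul_kronecker_mul, Matrix.one_mul, hV,
    Matrix.one_kronecker_one]

lemma W_mix {V : Matrix n' n ℂ} (Y : Matrix n n ℂ) :
    ((1 : Matrix m m ℂ) ⊗ₖ V) * ((1 : Matrix m m ℂ) ⊗ₖ Y) * ((1 : Matrix m m ℂ) ⊗ₖ V)ᴴ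
      = (1 : Matrix m m ℂ) ⊗ₖ (V * Y * Vᴴ) := by
  rw [kron_conjT, conjTranspose_one, ← Matrix.mul_kronecker_mul, ← Matrix.mul_kronecker_mul,
    Matrix.one_mul, Matrix.one_mul]

lemma W_mix' {V : Matrix n' n ℂ} (Y' : Matrix n' n' ℂ) :
    ((1 : Matrix m m ℂ) ⊗ₖ V)ᴴ * ((1 : Matrix m m ℂ) ⊗ₖ Y') * ((1 : Matrix m m ℂ) ⊗ₖ V)
      = (1 : Matrix m m ℂ) ⊗ₖ (Vᴴ * Y' * V) := by
  rw [kron_conjT, conjTranspose_one, ← Matrix.mul_kronecker_mul, ← Matrix.mul_kronecker_mul,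
    Matrix.one_mul, Matrix.one_mul]

lemma HS_nonempty {ρ : Matrix (m × n) (m × n) ℂ} (hρ : ρ.PosSemidef) :
    (HS ρ).Nonempty := by
  refine ⟨((((ρ.trace).re : ℂ)) • (1 : Matrix n n ℂ)).trace.re,
    (((ρ.trace).re : ℂ)) • 1, psd_smul Matrix.PosSemidef.one (psd_trace_re_nonneg hρ), ?_, rfl⟩
  have : (1 : Matrix m m ℂ) ⊗ₖ ((((ρ.trace).re : ℂ)) • (1 : Matrix n n ℂ))
      = (((ρ.trace).re : ℂ)) • (1 : Matrix (m × n) (m × n) ℂ) := by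
    rw [Matrix.kronecker_smul, Matrix.one_kronecker_one]
  rw [this]
  exact psd_le_trace_smul_one hρ

lemma HS_nonneg {ρ : Matrix (m × n) (m × n) ℂ} {t : ℝ} (ht : t ∈ HS ρ) : 0 ≤ t := by
  obtain ⟨Y, hY, -, rfl⟩ := ht
  exact psd_trace_re_nonneg hY

lemma HS_bddBelow (ρ : Matrix (m × n) (m × n) ℂ) : BddBelow (HS ρ) :=
  ⟨0, fun _ ht => HS_nonneg ht⟩

lemma HS_lower {ρ : Matrix (m × n) (m × n) ℂ} {t : ℝ} (ht : t ∈ HS ρ) :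
    (ρ.trace).re ≤ (Fintype.card m : ℝ) * t := by
  obtain ⟨Y, hY, hfeas, rfl⟩ := ht
  have h1 : 0 ≤ ((((1 : Matrix m m ℂ) ⊗ₖ Y) - ρ).trace).re := psd_trace_re_nonneg hfeas
  have h2 : (((1 : Matrix m m ℂ) ⊗ₖ Y)).trace = (Fintype.card m : ℂ) * Y.trace := by
    rw [Matrix.trace_kronecker, Matrix.trace_one]
  rw [Matrix.trace_sub, Complex.sub_re, h2] at h1
  have : ((Fintype.card m : ℂ) * Y.trace).re = (Fintype.card m : ℝ) * (Y.trace).re := by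
    simp [Complex.mul_re]
  rw [this] at h1
  linarith

lemma HS_pull {V : Matrix n' n ℂ} (hV : Vᴴ * V = 1)
    {ρ'' : Matrix (m × n') (m × n') ℂ} {t'' : ℝ} (ht'' : t'' ∈ HS ρ'') :
    ∃ t ∈ HS (((1 : Matrix m m ℂ) ⊗ₖ V)ᴴ * ρ'' * ((1 : Matrix m m ℂ) ⊗ₖ V)), t ≤ t'' := by
  obtain ⟨Y'', hY'', hfeas, rfl⟩ := ht''
  refine ⟨((Vᴴ * Y'' * V).trace).re, ⟨Vᴴ * Y'' * V, hY''.conjTranspose_mul_mul_same V, ?_, rfl⟩,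
    trace_re_pull_le hV hY''⟩
  have key : ((1 : Matrix m m ℂ) ⊗ₖ (Vᴴ * Y'' * V)) -
      (((1 : Matrix m m ℂ) ⊗ₖ V)ᴴ * ρ'' * ((1 : Matrix m m ℂ) ⊗ₖ V)) =
      ((1 : Matrix m m ℂ) ⊗ₖ V)ᴴ * (((1 : Matrix m m ℂ) ⊗ₖ Y'') - ρ'') *
        ((1 : Matrix m m ℂ) ⊗ₖ V) := by
    rw [Matrix.mul_sub, Matrix.sub_mul, W_mix']
  rw [key]
  exact hfeas.conjTranspose_mul_mul_same _

lemma HS_push {V : Matrix n' n ℂ} (hV : Vᴴ * V = 1)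
    {ρ : Matrix (m × n) (m × n) ℂ} :
    HS ρ ⊆ HS (((1 : Matrix m m ℂ) ⊗ₖ V) * ρ * ((1 : Matrix m m ℂ) ⊗ₖ V)ᴴ) := by
  rintro t ⟨Y, hY, hfeas, rfl⟩
  refine ⟨V * Y * Vᴴ, hY.mul_mul_conjTranspose_same V, ?_, ?_⟩
  · have key : ((1 : Matrix m m ℂ) ⊗ₖ (V * Y * Vᴴ)) -
        (((1 : Matrix m m ℂ) ⊗ₖ V) * ρ * ((1 : Matrix m m ℂ) ⊗ₖ V)ᴴ) =
        ((1 : Matrix m m ℂ) ⊗ₖ V) * (((1 : Matrix m m ℂ) ⊗ₖ Y) - ρ) *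
          ((1 : Matrix m m ℂ) ⊗ₖ V)ᴴ := by
      rw [Matrix.mul_sub, Matrix.sub_mul, W_mix]
    rw [key]
    exact hfeas.mul_mul_conjTranspose_same _
  · rw [trace_conj hV]

lemma Hmin_push_eq {V : Matrix n' n ℂ} (hV : Vᴴ * V = 1)
    {ρ : Matrix (m × n) (m × n) ℂ} (hρ : ρ.PosSemidef) :
    Hmin (((1 : Matrix m m ℂ) ⊗ₖ V) * ρ * ((1 : Matrix m m ℂ) ⊗ₖ V)ᴴ) = Hmin ρ := by
  set W := (1 : Matrix m m ℂ) ⊗ₖ V with hW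
  have hWiso : Wᴴ * W = 1 := W_isometry hV
  have hback : Wᴴ * (W * ρ * Wᴴ) * W = ρ := by
    calc Wᴴ * (W * ρ * Wᴴ) * W = (Wᴴ * W) * ρ * (Wᴴ * W) := by simp only [Matrix.mul_assoc]
      _ = ρ := by rw [hWiso, Matrix.one_mul, Matrix.mul_one]
  rw [Hmin_eq, Hmin_eq]
  congr 2
  apply le_antisymm
  · exact csInf_le_csInf (HS_bddBelow _) (HS_nonempty hρ) (HS_push hV)
  · refine le_csInf ((HS_nonempty hρ).mono (HS_push hV)) fun t'' ht'' => ?_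
    obtain ⟨t, ht, hle⟩ := HS_pull hV ht''
    rw [hback] at ht
    exact (csInf_le (HS_bddBelow _) ht).trans hle

lemma Hmin_pull_ge [Nonempty m] {V : Matrix n' n ℂ} (hV : Vᴴ * V = 1)
    {ρ'' : Matrix (m × n') (m × n') ℂ} (hρ'' : ρ''.PosSemidef)
    (hpos : 0 < (((((1 : Matrix m m ℂ) ⊗ₖ V)ᴴ * ρ'' * ((1 : Matrix m m ℂ) ⊗ₖ V)).trace).re)) :
    Hmin ρ'' ≤ Hmin (((1 : Matrix m m ℂ) ⊗ₖ V)ᴴ * ρ'' * ((1 : Matrix m m ℂ) ⊗ₖ V)) := by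
  set W := (1 : Matrix m m ℂ) ⊗ₖ V with hW
  set ρ' := Wᴴ * ρ'' * W with hρ'def
  have hρ' : ρ'.PosSemidef := hρ''.conjTranspose_mul_mul_same W
  have hcard : (0 : ℝ) < (Fintype.card m : ℝ) := by
    exact_mod_cast Fintype.card_pos
  have hlow : ∀ t ∈ HS ρ', (ρ'.trace).re / (Fintype.card m : ℝ) ≤ t := fun t ht => by
    have := HS_lower ht
    rw [div_le_iff₀ hcard]
    linarith
  have hInfpos : 0 < sInf (HS ρ') :=
    lt_of_lt_of_le (by positivity) (le_csInf (HS_nonempty hρ') hlow)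
  have hle : sInf (HS ρ') ≤ sInf (HS ρ'') := by
    refine le_csInf (HS_nonempty hρ'') fun t'' ht'' => ?_
    obtain ⟨t, ht, h⟩ := HS_pull hV ht''
    exact (csInf_le (HS_bddBelow _) ht).trans h
  rw [Hmin_eq, Hmin_eq]
  exact neg_le_neg (Real.logb_le_logb_of_le one_lt_two hInfpos hle)

lemma gfid_pull {V : Matrix n' n ℂ} (hV : Vᴴ * V = 1)
    {σ : Matrix (m × n) (m × n) ℂ} (hσ : σ.PosSemidef) (hσtr : (σ.trace).re = 1)
    {ρ'' : Matrix (m × n') (m × n') ℂ} (hρ'' : ρ''.PosSemidef) :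
    gfid ρ'' (((1 : Matrix m m ℂ) ⊗ₖ V) * σ * ((1 : Matrix m m ℂ) ⊗ₖ V)ᴴ)
      = gfid (((1 : Matrix m m ℂ) ⊗ₖ V)ᴴ * ρ'' * ((1 : Matrix m m ℂ) ⊗ₖ V)) σ := by
  set W := (1 : Matrix m m ℂ) ⊗ₖ V with hW
  have hWiso : Wᴴ * W = 1 := W_isometry hV
  set ρ' := Wᴴ * ρ'' * W with hρ'def
  set s := msqrt σ with hsdef
  have hspsd : s.PosSemidef := msqrt_psd hσ
  have hρ' : ρ'.PosSemidef := hρ''.conjTranspose_mul_mul_same W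
  have hM : (s * ρ' * s).PosSemidef := by
    have := hρ'.conjTranspose_mul_mul_same s
    rwa [hspsd.1.eq] at this
  have m1 : msqrt (W * σ * Wᴴ) = W * s * Wᴴ := msqrt_conj hWiso hσ
  have key : msqrt (W * σ * Wᴴ) * ρ'' * msqrt (W * σ * Wᴴ) = W * (s * ρ' * s) * Wᴴ := by
    rw [m1, hρ'def]
    simp only [Matrix.mul_assoc]
  rw [gfid, gfid, key, msqrt_conj hWiso hM, trace_conj hWiso, trace_conj hWiso, hσtr]
  simp [hsdef]

end StmtAux3

namespace StmtAux4

open StmtAux StmtAux2 StmtAux3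

variable {m n n' : Type*} [Fintype m] [DecidableEq m] [Fintype n] [DecidableEq n]
  [Fintype n'] [DecidableEq n']

def SM {m n : Type*} [Fintype m] [DecidableEq m] [Fintype n] [DecidableEq n]
    (ε : ℝ) (ρ : Matrix (m × n) (m × n) ℂ) : Set ℝ :=
  {t : ℝ | ∃ ρ' : Matrix (m × n) (m × n) ℂ, ρ'.PosSemidef ∧ (ρ'.trace).re ≤ 1 ∧
    pdist ρ' ρ ≤ ε ∧ t = Hmin ρ'}

lemma smoothHmin_eq (ε : ℝ) (ρ : Matrix (m × n) (m × n) ℂ) :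
    smoothHmin ε ρ = sSup (SM ε ρ) := rfl

lemma gfid_self {σ : Matrix (m × n) (m × n) ℂ} (hσ : σ.PosSemidef)
    (hσtr : (σ.trace).re = 1) : gfid σ σ = 1 := by
  set s := msqrt σ with hsdef
  have hss : s * s = σ := msqrt_mul_self hσ
  have h : s * σ * s = σ * σ := by
    rw [← hss]; simp only [Matrix.mul_assoc]
  rw [gfid, ← hsdef, h, msqrt_sq hσ, hσtr]
  simp

lemma pdist_self {σ : Matrix (m × n) (m × n) ℂ} (hσ : σ.PosSemidef)
    (hσtr : (σ.trace).re = 1) : pdist σ σ = 0 := by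
  rw [pdist, gfid_self hσ hσtr]
  simp

lemma trace_pos_of_pdist {ρ' σ : Matrix (m × n) (m × n) ℂ} (hρ' : ρ'.PosSemidef)
    (hσtr : (σ.trace).re = 1) {ε : ℝ} (h : pdist ρ' σ ≤ ε) (hε1 : ε < 1) :
    0 < (ρ'.trace).re := by
  rcases (psd_trace_re_nonneg hρ').lt_or_eq with hlt | heq
  · exact hlt
  · exfalso
    have h0 : ρ' = 0 := psd_eq_zero_of_trace hρ' heq.symm
    have : pdist ρ' σ = 1 := by
      rw [h0, pdist, gfid]
      simp [msqrt_zero, hσtr]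
    rw [this] at h
    linarith

lemma smoothHmin_conj [Nonempty m] {V : Matrix n' n ℂ} (hV : Vᴴ * V = 1)
    {σ : Matrix (m × n) (m × n) ℂ} (hσ : σ.PosSemidef) (hσtr : (σ.trace).re = 1)
    {ε : ℝ} (hε0 : 0 ≤ ε) (hε1 : ε < 1) :
    smoothHmin ε σ =
      smoothHmin ε (((1 : Matrix m m ℂ) ⊗ₖ V) * σ * ((1 : Matrix m m ℂ) ⊗ₖ V)ᴴ) := by
  set W := (1 : Matrix m m ℂ) ⊗ₖ V with hW
  have hWiso : Wᴴ * W = 1 := W_isometry hV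
  have hback : ∀ X : Matrix (m × n) (m × n) ℂ, Wᴴ * (W * X * Wᴴ) * W = X := fun X => by
    calc Wᴴ * (W * X * Wᴴ) * W = (Wᴴ * W) * X * (Wᴴ * W) := by simp only [Matrix.mul_assoc]
      _ = X := by rw [hWiso, Matrix.one_mul, Matrix.mul_one]
  have h1 : SM ε σ ⊆ SM ε (W * σ * Wᴴ) := by
    rintro t ⟨ρ', hpsd, htr, hpd, rfl⟩
    refine ⟨W * ρ' * Wᴴ, hpsd.mul_mul_conjTranspose_same W, ?_, ?_, ?_⟩
    · rw [trace_conj hWiso]; exact htr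
    · have hg : gfid (W * ρ' * Wᴴ) (W * σ * Wᴴ) = gfid ρ' σ := by
        rw [gfid_pull hV hσ hσtr (hpsd.mul_mul_conjTranspose_same W), hback]
      rw [pdist, hg]
      exact hpd
    · rw [Hmin_push_eq hV hpsd]
  have h2 : ∀ t ∈ SM ε (W * σ * Wᴴ), ∃ t' ∈ SM ε σ, t ≤ t' := by
    rintro t ⟨ρ'', hpsd, htr, hpd, rfl⟩
    have hρ' : (Wᴴ * ρ'' * W).PosSemidef := hpsd.conjTranspose_mul_mul_same W
    have hpd' : pdist (Wᴴ * ρ'' * W) σ ≤ ε := by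
      rw [pdist, ← gfid_pull hV hσ hσtr hpsd]
      exact hpd
    have htr' : ((Wᴴ * ρ'' * W).trace).re ≤ 1 :=
      (trace_re_pull_le hWiso hpsd).trans htr
    have hpos : 0 < ((Wᴴ * ρ'' * W).trace).re :=
      trace_pos_of_pdist hρ' hσtr hpd' hε1
    exact ⟨Hmin (Wᴴ * ρ'' * W), ⟨Wᴴ * ρ'' * W, hρ', htr', hpd', rfl⟩,
      Hmin_pull_ge hV hpsd hpos⟩
  have hne : (SM ε σ).Nonempty :=
    ⟨Hmin σ, σ, hσ, le_of_eq hσtr, by rw [pdist_self hσ hσtr]; exact hε0, rfl⟩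
  rw [smoothHmin_eq, smoothHmin_eq]
  by_cases hb : BddAbove (SM ε σ)
  · have hb2 : BddAbove (SM ε (W * σ * Wᴴ)) := by
      obtain ⟨M, hM⟩ := hb
      refine ⟨M, fun t ht => ?_⟩
      obtain ⟨t', ht', hle⟩ := h2 t ht
      exact hle.trans (hM ht')
    refine le_antisymm (csSup_le_csSup hb2 hne h1) ?_
    refine csSup_le (hne.mono h1) fun t ht => ?_
    obtain ⟨t', ht', hle⟩ := h2 t ht
    exact hle.trans (le_csSup hb ht')
  · have hb2 : ¬ BddAbove (SM ε (W * σ * Wᴴ)) := fun hbdd => hb (hbdd.mono h1)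
    rw [Real.sSup_of_not_bddAbove hb, Real.sSup_of_not_bddAbove hb2]

end StmtAux4

namespace StmtAux5

open StmtAux StmtAux2 StmtAux3 StmtAux4

variable {m : Type*} [Fintype m] [DecidableEq m]

lemma psd_std (x : m) : (Matrix.single x x (1 : ℂ)).PosSemidef := by
  have h : Matrix.single x x (1 : ℂ) =
      (Matrix.single x x (1 : ℂ))ᴴ * (Matrix.single x x (1 : ℂ)) := by
    ext a b
    simp only [Matrix.mul_apply, Matrix.conjTranspose_apply, Matrix.single,
      Matrix.of_apply, ite_and]
    rw [Finset.sum_eq_single x]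
    · split_ifs <;> simp_all
    · intro c _ hc
      rw [if_neg (Ne.symm hc)]
      simp
    · simp
  rw [h]
  exact Matrix.posSemidef_conjTranspose_mul_self _

lemma trace_std (x : m) : (Matrix.single x x (1 : ℂ)).trace = 1 := by
  simp [Matrix.trace, Matrix.diag, Matrix.single]

end StmtAux5

end AuxiliaryLemmas

/-- generating a classical register `C = f(B)` from the classical side
information `B` does not change the smooth min-entropy:
`H^ε_min(A|B)_{ρ_AB} = H^ε_min(A|BC)_{ρ_ABC}`. -/
theorem stmt_17 {dA : ℕ} {I J : Type*}
    [Fintype I] [DecidableEq I] [Nonempty I]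
    [Fintype J] [DecidableEq J] [Nonempty J]
    (f : I → J) (p : I → ℝ) (hp0 : ∀ i, 0 ≤ p i) (hp1 : ∑ i : I, p i = 1)
    (ρA : I → Matrix (Fin dA) (Fin dA) ℂ)
    (hρA : ∀ i, (ρA i).PosSemidef ∧ (ρA i).trace = 1)
    (ε : ℝ) (hε : ε ∈ Set.Ico (0 : ℝ) 1) :
    smoothHmin ε
        (∑ i : I, (p i : ℂ) • (ρA i ⊗ₖ Matrix.single i i (1 : ℂ))) =
      smoothHmin ε
        (∑ i : I, (p i : ℂ) •
          (ρA i ⊗ₖ (Matrix.single i i (1 : ℂ) ⊗ₖ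
            Matrix.single (f i) (f i) (1 : ℂ)))) := by
  open StmtAux StmtAux2 StmtAux3 StmtAux4 StmtAux5 in
  obtain ⟨hε0, hε1⟩ := hε
  have i0 : I := Classical.arbitrary I
  haveI hdA : Nonempty (Fin dA) := by
    by_contra h
    rw [not_nonempty_iff] at h
    have h2 := (hρA i0).2
    rw [Matrix.trace_eq_zero_of_isEmpty] at h2
    exact one_ne_zero h2.symm
  set V : Matrix (I × J) I ℂ :=
    Matrix.of (fun q i' => if q.1 = i' ∧ q.2 = f i' then 1 else 0) with hVdef
  have hV : Vᴴ * V = 1 := by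
    ext a b
    simp only [Matrix.mul_apply, Matrix.conjTranspose_apply, hVdef, Matrix.one_apply,
      Matrix.of_apply]
    rw [Finset.sum_eq_single ((a, f a) : I × J)]
    · by_cases h : a = b
      · subst h; simp
      · simp [h]
    · rintro ⟨x1, x2⟩ - hx
      by_cases h1 : x1 = a ∧ x2 = f a
      · exact absurd (Prod.ext h1.1 h1.2) hx
      · rw [if_neg h1]
        simp
    · simp
  set σ : Matrix (Fin dA × I) (Fin dA × I) ℂ :=
    ∑ i : I, (p i : ℂ) • (ρA i ⊗ₖ Matrix.single i i (1 : ℂ)) with hσdef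
  have hσ : σ.PosSemidef :=
    StmtAux.psd_sum _ fun i _ =>
      StmtAux.psd_smul (StmtAux.psd_kron (hρA i).1 (StmtAux5.psd_std i)) (hp0 i)
  have hσtrC : σ.trace = 1 := by
    rw [hσdef, Matrix.trace_sum]
    simp only [Matrix.trace_smul, Matrix.trace_kronecker, StmtAux5.trace_std,
      (hρA _).2, mul_one, smul_eq_mul, one_mul]
    rw [← Complex.ofReal_sum, hp1, Complex.ofReal_one]
  have hσtr : (σ.trace).re = 1 := by rw [hσtrC]; simp
  have hWσ : ((1 : Matrix (Fin dA) (Fin dA) ℂ) ⊗ₖ V) * σ *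
      ((1 : Matrix (Fin dA) (Fin dA) ℂ) ⊗ₖ V)ᴴ =
      ∑ i : I, (p i : ℂ) •
        (ρA i ⊗ₖ (Matrix.single i i (1 : ℂ) ⊗ₖ
          Matrix.single (f i) (f i) (1 : ℂ))) := by
    rw [hσdef, Matrix.mul_sum, Matrix.sum_mul]
    refine Finset.sum_congr rfl fun i _ => ?_
    rw [Matrix.mul_smul, Matrix.smul_mul]
    congr 1
    rw [StmtAux.kron_conjT, Matrix.conjTranspose_one, ← Matrix.mul_kronecker_mul,
      ← Matrix.mul_kronecker_mul, Matrix.one_mul, Matrix.mul_one]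
    congr 1
    ext ⟨a, b⟩ ⟨c, d⟩
    simp only [Matrix.mul_apply, Matrix.conjTranspose_apply, hVdef, Matrix.of_apply,
      Matrix.single, Matrix.kroneckerMap_apply, ite_and, Fintype.sum_prod_type]
    congr 1
    rw [Finset.sum_eq_single i, Finset.sum_eq_single i]
    · by_cases h1 : a = i <;> by_cases h2 : b = f i <;>
        by_cases h3 : c = i <;> by_cases h4 : d = f i <;>
        simp [h1, h2, h3, h4, eq_comm] <;>
        (try simp [Ne.symm h1]) <;> (try simp [Ne.symm h2]) <;>
        (try simp [Ne.symm h3]) <;> (try simp [Ne.symm h4])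
    · rintro x - hx
      simp [Ne.symm hx]
    · simp
    · rintro x - hx
      simp [Ne.symm hx]
    · simp
  rw [← hWσ]
  exact StmtAux4.smoothHmin_conj hV hσ hσtr hε0 hε1
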